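/- Fix r ≥ 2. The map sending an r-core partition λ to its charge vector (c_0, …, c_{r−1}), where c_i is the charge of the residue-i subdiagram m_i(λ) of its Maya diagram, is a bijection from r-core partitions onto the set {(c_0,…,c_{r−1}) ∈ ℤ^r : c_0 + ⋯ + c_{r−1} = 0} (the A_{r−1} root lattice). -/

import Mathlib

/-- Two cells are (edge-)adjacent. -/
def Adj (a b : ℕ × ℕ) : Prop :=
  (a.1 = b.1 ∧ (a.2 + 1 = b.2 ∨ b.2 + 1 = a.2)) ∨
  (a.2 = b.2 ∧ (a.1 + 1 = b.1 ∨ b.1 + 1 = a.1))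

/-- A set of cells is connected (any two cells are joined by a path of
edge-adjacent cells inside the set). -/
def ConnectedCells (s : Set (ℕ × ℕ)) : Prop :=
  ∀ x ∈ s, ∀ y ∈ s, Relation.ReflTransGen (fun a b => Adj a b ∧ a ∈ s ∧ b ∈ s) x y

/-- `ν` is obtained from `μ` by removing a ribbon (rim hook) of length `r`:
the skew shape `μ/ν` has `r` cells, is connected, and contains no 2×2 square. -/
def IsRibbonOf (r : ℕ) (μ ν : YoungDiagram) : Prop :=
  ν.cells ⊆ μ.cells ∧ (μ.cells \ ν.cells).card = r ∧
  ConnectedCells ((μ.cells : Set (ℕ × ℕ)) \ (ν.cells : Set (ℕ × ℕ))) ∧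
  ∀ i j : ℕ, ¬ ((i, j) ∈ μ.cells \ ν.cells ∧ (i + 1, j) ∈ μ.cells \ ν.cells ∧
      (i, j + 1) ∈ μ.cells \ ν.cells ∧ (i + 1, j + 1) ∈ μ.cells \ ν.cells)

/-- An `r`-core is a partition with no removable ribbon of length `r`. -/
def IsRCore (r : ℕ) (μ : YoungDiagram) : Prop := ∀ ν, ¬ IsRibbonOf r μ ν

/-- The beta-set of a partition. -/
def betaSet (μ : YoungDiagram) : Set ℤ :=
  {n | ∃ i : ℕ, n = (μ.rowLen i : ℤ) - (i + 1)}

/-- The charge of the residue-`i` subdiagram of the Maya diagram with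
black-bead set `S`: the number of black beads at positions `i + kr`, `k ≥ 0`,
minus the number of white beads at positions `i + kr`, `k < 0`. -/
noncomputable def charge (r : ℕ) (S : Set ℤ) (i : ℤ) : ℤ :=
  ({k : ℕ | i + (k : ℤ) * r ∈ S}.ncard : ℤ) -
    ({k : ℕ | i - ((k : ℤ) + 1) * r ∉ S}.ncard : ℤ)

namespace RCoreProof

lemma anti_le_sub {γ : ℕ → ℤ} (h : StrictAnti γ) (i k : ℕ) :
    γ (i + k) ≤ γ i - k := by
  induction k with
  | zero => simp
  | succ k ih =>
    have h2 := h (show i + k < i + (k + 1) by omega)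
    push_cast
    push_cast at ih
    omega

lemma anti_le_of_le {γ : ℕ → ℤ} (h : StrictAnti γ) {i j : ℕ} (hij : i ≤ j) :
    γ j + ((j : ℤ) - i) ≤ γ i := by
  have := anti_le_sub h i (j - i)
  have hc : ((j - i : ℕ) : ℤ) = (j : ℤ) - i := by omega
  rw [show i + (j - i) = j by omega] at this
  omega

lemma ge_of_eventual {γ : ℕ → ℤ} (h1 : StrictAnti γ) {N : ℕ}
    (h2 : ∀ i, N ≤ i → γ i = -((i : ℤ) + 1)) (i : ℕ) : -((i : ℤ) + 1) ≤ γ i := by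
  have h3 := anti_le_of_le h1 (le_max_left i N)
  rw [h2 _ (le_max_right i N)] at h3
  have : (i : ℤ) ≤ (max i N : ℤ) := by exact_mod_cast le_max_left i N
  omega

/-- The Young diagram with beta-numbers `γ`. -/
def ofGamma (γ : ℕ → ℤ) (h1 : StrictAnti γ) (N : ℕ)
    (h2 : ∀ i, N ≤ i → γ i = -((i : ℤ) + 1)) : YoungDiagram where
  cells := (Finset.range N ×ˢ Finset.range (γ 0 + 1).toNat).filter
    (fun p => (p.2 : ℤ) < γ p.1 + p.1 + 1)
  isLowerSet := by
    rintro ⟨i2, j2⟩ ⟨i1, j1⟩ hle hm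
    rw [Prod.mk_le_mk] at hle
    obtain ⟨hi, hj⟩ := hle
    simp only [Finset.coe_filter, Set.mem_setOf_eq, Finset.mem_product,
      Finset.mem_range] at hm ⊢
    obtain ⟨⟨hiN, hjM⟩, hlt⟩ := hm
    have hmono : γ i2 + (i2 : ℤ) ≤ γ i1 + i1 := by
      have := anti_le_of_le h1 hi
      omega
    have hji : (j1 : ℤ) ≤ j2 := by exact_mod_cast hj
    exact ⟨⟨by omega, by omega⟩, by omega⟩

lemma mem_ofGamma {γ : ℕ → ℤ} {h1 : StrictAnti γ} {N : ℕ}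
    {h2 : ∀ i, N ≤ i → γ i = -((i : ℤ) + 1)} {i j : ℕ} :
    (i, j) ∈ ofGamma γ h1 N h2 ↔ (j : ℤ) < γ i + i + 1 := by
  show (i, j) ∈ YoungDiagram.cells _ ↔ _
  simp only [ofGamma, Finset.mem_filter, Finset.mem_product, Finset.mem_range]
  constructor
  · rintro ⟨-, h⟩; exact h
  · intro h
    refine ⟨⟨?_, ?_⟩, h⟩
    · by_contra hN
      rw [h2 i (by omega)] at h
      omega
    · have hb : γ i + (i : ℤ) ≤ γ 0 := by
        have := anti_le_of_le h1 (Nat.zero_le i)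
        omega
      have := Int.self_le_toNat (γ 0 + 1)
      omega

lemma rowLen_ofGamma {γ : ℕ → ℤ} {h1 : StrictAnti γ} {N : ℕ}
    {h2 : ∀ i, N ≤ i → γ i = -((i : ℤ) + 1)} (i : ℕ) :
    (ofGamma γ h1 N h2).rowLen i = (γ i + i + 1).toNat := by
  have key : ∀ j : ℕ, j < (ofGamma γ h1 N h2).rowLen i ↔ j < (γ i + i + 1).toNat := by
    intro j
    rw [← YoungDiagram.mem_iff_lt_rowLen, mem_ofGamma, Int.lt_toNat]
  have k1 := key ((ofGamma γ h1 N h2).rowLen i)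
  have k2 := key ((γ i + i + 1).toNat)
  omega

lemma rowLen_ofGamma_int {γ : ℕ → ℤ} {h1 : StrictAnti γ} {N : ℕ}
    {h2 : ∀ i, N ≤ i → γ i = -((i : ℤ) + 1)} (i : ℕ) :
    ((ofGamma γ h1 N h2).rowLen i : ℤ) = γ i + i + 1 := by
  rw [rowLen_ofGamma]
  exact Int.toNat_of_nonneg (by have := ge_of_eventual h1 h2 i; omega)

lemma betaSet_ofGamma {γ : ℕ → ℤ} {h1 : StrictAnti γ} {N : ℕ}
    {h2 : ∀ i, N ≤ i → γ i = -((i : ℤ) + 1)} :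
    betaSet (ofGamma γ h1 N h2) = Set.range γ := by
  ext n
  simp only [betaSet, Set.mem_setOf_eq, Set.mem_range]
  constructor
  · rintro ⟨i, rfl⟩
    exact ⟨i, by rw [rowLen_ofGamma_int]; ring⟩
  · rintro ⟨i, rfl⟩
    exact ⟨i, by rw [rowLen_ofGamma_int]; ring⟩

/-- The beta-numbers of a diagram. -/
def bfun (μ : YoungDiagram) (i : ℕ) : ℤ := (μ.rowLen i : ℤ) - (i + 1)

lemma betaSet_eq_range (μ : YoungDiagram) : betaSet μ = Set.range (bfun μ) := by
  ext n
  simp only [betaSet, Set.mem_setOf_eq, Set.mem_range, bfun, eq_comm]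

lemma bfun_strictAnti (μ : YoungDiagram) : StrictAnti (bfun μ) := by
  apply strictAnti_nat_of_succ_lt
  intro i
  have := μ.rowLen_anti i (i + 1) (by omega)
  simp only [bfun]
  push_cast
  omega

lemma rowLen_eq_zero' {μ : YoungDiagram} {i : ℕ} (h : μ.colLen 0 ≤ i) :
    μ.rowLen i = 0 := by
  by_contra h0
  have hm : (i, 0) ∈ μ := YoungDiagram.mem_iff_lt_rowLen.mpr (by omega)
  rw [YoungDiagram.mem_iff_lt_colLen] at hm
  omega

lemma bfun_eventually (μ : YoungDiagram) :
    ∀ i, μ.colLen 0 ≤ i → bfun μ i = -((i : ℤ) + 1) := by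
  intro i hi
  simp [bfun, rowLen_eq_zero' hi]

lemma betaSet_inj {μ ν : YoungDiagram} (h : betaSet μ = betaSet ν) : μ = ν := by
  rw [betaSet_eq_range, betaSet_eq_range] at h
  have hb : bfun μ = bfun ν := by
    have h1 : StrictMono (OrderDual.toDual ∘ bfun μ) := (bfun_strictAnti μ).dual_right
    have h2 : StrictMono (OrderDual.toDual ∘ bfun ν) := (bfun_strictAnti ν).dual_right
    have hr : Set.range (OrderDual.toDual ∘ bfun μ) = Set.range (OrderDual.toDual ∘ bfun ν) := by
      rw [Set.range_comp, Set.range_comp, h]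
    have := (h1.range_inj h2).mp hr
    funext i
    exact OrderDual.toDual.injective (congrFun this i)
  have hrl : ∀ i, μ.rowLen i = ν.rowLen i := by
    intro i
    have := congrFun hb i
    simp only [bfun] at this
    omega
  apply SetLike.ext
  rintro ⟨i, j⟩
  rw [YoungDiagram.mem_iff_lt_rowLen, YoungDiagram.mem_iff_lt_rowLen, hrl i]




lemma window_count {γ : ℕ → ℤ} (h1 : StrictAnti γ) {N : ℕ}
    (h2 : ∀ i, N ≤ i → γ i = -((i : ℤ) + 1)) (m : ℕ) (hm : N ≤ m) :
    (Set.range γ ∩ Set.Ici (-(m : ℤ))).ncard = m := by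
  have hge : ∀ i : ℕ, -((i : ℤ) + 1) ≤ γ i := ge_of_eventual h1 h2
  have hset : Set.range γ ∩ Set.Ici (-(m : ℤ)) = ↑((Finset.range m).image γ) := by
    ext n
    simp only [Set.mem_inter_iff, Set.mem_range, Set.mem_Ici, Finset.coe_image,
      Finset.coe_range, Set.mem_image, Set.mem_Iio]
    constructor
    · rintro ⟨⟨i, rfl⟩, hn⟩
      refine ⟨i, ?_, rfl⟩
      by_contra him
      rw [h2 i (by omega)] at hn
      omega
    · rintro ⟨i, him, rfl⟩
      refine ⟨⟨i, rfl⟩, ?_⟩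
      have := hge i
      have : (i : ℤ) < m := by exact_mod_cast him
      omega
  rw [hset, Set.ncard_coe_finset,
    Finset.card_image_of_injective _ h1.injective, Finset.card_range]

lemma charge_eq {r : ℕ} (hr : 0 < r) (S : Set ℤ) (i t : ℤ)
    (hK : ∀ k : ℤ, i + k * r ∈ S ↔ k < t) : charge r S i = t := by
  have h1 : {k : ℕ | i + (k : ℤ) * r ∈ S} = ↑(Finset.range t.toNat) := by
    ext k
    simp only [Set.mem_setOf_eq, Finset.coe_range, Set.mem_Iio, hK]
    omega
  have h2 : {k : ℕ | i - ((k : ℤ) + 1) * r ∉ S} = ↑(Finset.range (-t).toNat) := by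
    ext k
    have he : i - ((k : ℤ) + 1) * r = i + (-((k : ℤ) + 1)) * r := by ring
    simp only [Set.mem_setOf_eq, Finset.coe_range, Set.mem_Iio, he, hK]
    omega
  rw [charge, h1, h2, Set.ncard_coe_finset, Set.ncard_coe_finset,
    Finset.card_range, Finset.card_range]
  omega

lemma fin_coe_nonneg {r : ℕ} (i : Fin r) : (0 : ℤ) ≤ (i : ℤ) := by positivity

lemma fin_coe_lt {r : ℕ} (i : Fin r) : (i : ℤ) < (r : ℤ) := by
  exact_mod_cast i.isLt

lemma residue_window {r : ℕ} (hr : 0 < r) (S : Set ℤ) (t : Fin r → ℤ)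
    (hK : ∀ (i : Fin r) (k : ℤ), ((i : ℤ) + k * r) ∈ S ↔ k < t i) (M : ℕ)
    (hM : ∀ i, -(M : ℤ) ≤ t i) :
    ∃ W : Finset ℤ, ↑W = S ∩ Set.Ici (-(M : ℤ) * r) ∧
      (W.card : ℤ) = ∑ i, (t i + M) := by
  classical
  have hrz : (0 : ℤ) < r := by exact_mod_cast hr
  refine ⟨Finset.univ.biUnion
    (fun i : Fin r => (Finset.Ico (-(M : ℤ)) (t i)).image (fun k => (i : ℤ) + k * r)),
    ?_, ?_⟩
  · ext n
    simp only [Finset.coe_biUnion, Finset.mem_coe, Finset.mem_univ, Set.iUnion_true,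
      Set.mem_iUnion, Finset.mem_image, Finset.mem_Ico, Set.mem_inter_iff, Set.mem_Ici]
    constructor
    · rintro ⟨i, k, ⟨hk1, hk2⟩, rfl⟩
      refine ⟨(hK i k).mpr hk2, ?_⟩
      have h1 : -(M : ℤ) * r ≤ k * r := mul_le_mul_of_nonneg_right hk1 (le_of_lt hrz)
      have := fin_coe_nonneg i
      omega
    · rintro ⟨hn, hn2⟩
      have hmod0 : 0 ≤ n % r := Int.emod_nonneg n (by omega)
      have hmodr : n % r < r := Int.emod_lt_of_pos n hrz
      set i : Fin r := ⟨(n % r).toNat, by omega⟩ with hi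
      have hcoe : (i : ℤ) = n % r := by
        simp only [hi]
        omega
      have hdecomp : n = (i : ℤ) + (n / r) * r := by
        rw [hcoe]
        have := Int.emod_add_mul_ediv n r
        linarith [mul_comm (r : ℤ) (n / r)]
      refine ⟨i, n / r, ⟨?_, ?_⟩, hdecomp.symm⟩
      · -- -(M:ℤ) ≤ n / r
        by_contra hlt
        push_neg at hlt
        have : n / r ≤ -(M : ℤ) - 1 := by omega
        have h3 : (n / r) * r ≤ (-(M : ℤ) - 1) * r := mul_le_mul_of_nonneg_right this (le_of_lt hrz)
        have : n = (i : ℤ) + (n / r) * r := hdecomp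
        rw [hcoe] at this
        nlinarith
      · exact (hK i (n / r)).mp (by rw [← hdecomp]; exact hn)
  · rw [Finset.card_biUnion]
    · push_cast
      apply Finset.sum_congr rfl
      intro i _
      rw [Finset.card_image_of_injective, Int.card_Ico]
      · have := hM i
        omega
      · intro k k' hkk
        have hkk' : ((i:ℤ)) + k * r = (i:ℤ) + k' * r := hkk
        exact mul_right_cancel₀ (show (r:ℤ) ≠ 0 by omega) (by linarith)
    · intro i _ j _ hij
      simp only [Finset.disjoint_left, Finset.mem_image, Finset.mem_Ico]
      rintro x ⟨k, hk, rfl⟩ ⟨k', hk', heq⟩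
      apply hij
      have heq' : ((i:ℤ)) + k * r = (j:ℤ) + k' * r := heq.symm
      have h1 : ((i : ℤ) + k * r) % r = i := by
        rw [Int.add_mul_emod_self_right]
        exact Int.emod_eq_of_lt (fin_coe_nonneg i) (fin_coe_lt i)
      have h2 : ((j : ℤ) + k' * r) % r = j := by
        rw [Int.add_mul_emod_self_right]
        exact Int.emod_eq_of_lt (fin_coe_nonneg j) (fin_coe_lt j)
      have : (i : ℤ) = j := by rw [← h1, ← h2, heq']
      have : (i : ℕ) = (j : ℕ) := by exact_mod_cast this
      exact Fin.ext this

lemma sum_t_eq_zero {r N : ℕ} (hr : 0 < r) {γ : ℕ → ℤ} (h1 : StrictAnti γ)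
    (h2 : ∀ i, N ≤ i → γ i = -((i : ℤ) + 1)) (t : Fin r → ℤ)
    (hK : ∀ (i : Fin r) (k : ℤ), ((i : ℤ) + k * r) ∈ Set.range γ ↔ k < t i) :
    ∑ i, t i = 0 := by
  classical
  set M := N + 1 + ∑ i, (t i).natAbs with hM
  have hMt : ∀ i, -(M : ℤ) ≤ t i := by
    intro i
    have h3 : (t i).natAbs ≤ ∑ j, (t j).natAbs :=
      Finset.single_le_sum (f := fun j => (t j).natAbs) (fun j _ => Nat.zero_le _)
        (Finset.mem_univ i)
    omega
  obtain ⟨W, hWs, hWc⟩ := residue_window hr _ t hK M hMt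
  have hwin : (Set.range γ ∩ Set.Ici (-(M : ℤ) * r)).ncard = M * r := by
    have := window_count h1 h2 (M * r) (by have := Nat.le_mul_of_pos_right M hr; omega)
    rw [show (-(↑(M * r) : ℤ)) = -(M : ℤ) * r by push_cast; ring] at this
    exact this
  rw [← hWs, Set.ncard_coe_finset] at hwin
  rw [hwin] at hWc
  have hs : ∑ i : Fin r, (t i + (M : ℤ)) = (∑ i, t i) + r * M := by
    rw [Finset.sum_add_distrib, Finset.sum_const, Finset.card_univ, Fintype.card_fin,
      nsmul_eq_mul]
  rw [hs] at hWc
  push_cast at hWc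
  have : (M : ℤ) * r = (r : ℤ) * M := by ring
  omega

lemma exists_threshold {r : ℕ} (hr : 0 < r) {γ : ℕ → ℤ} (h1 : StrictAnti γ) {N : ℕ}
    (h2 : ∀ i, N ≤ i → γ i = -((i : ℤ) + 1))
    (hst : ∀ n ∈ Set.range γ, n - r ∈ Set.range γ) (i : ℤ) (hi0 : 0 ≤ i) :
    ∃ t : ℤ, ∀ k : ℤ, i + k * r ∈ Set.range γ ↔ k < t := by
  classical
  have hrz : (0 : ℤ) < r := by exact_mod_cast hr
  have hdown : ∀ k : ℤ, ∀ d : ℕ, i + k * r ∈ Set.range γ → i + (k - d) * r ∈ Set.range γ := by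
    intro k d hk
    induction d with
    | zero => simpa using hk
    | succ d ih =>
      have := hst _ ih
      rw [show i + (k - (d : ℤ)) * r - r = i + (k - ((d : ℕ) + 1 : ℕ)) * r by push_cast; ring] at this
      exact this
  have hneg : ∀ n : ℤ, n ≤ -((N : ℤ) + 1) → n ∈ Set.range γ := by
    intro n hn
    refine ⟨(-n - 1).toNat, ?_⟩
    rw [h2 _ (by omega)]
    omega
  have hinh : ∃ k : ℤ, i + k * r ∈ Set.range γ := by
    refine ⟨-((N : ℤ) + 1 + i), hneg _ ?_⟩
    have hk0 : -((N : ℤ) + 1 + i) ≤ 0 := by omega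
    have : -((N : ℤ) + 1 + i) * r ≤ -((N : ℤ) + 1 + i) * 1 :=
      mul_le_mul_of_nonpos_left (by omega) hk0
    omega
  have hbdd : ∀ k : ℤ, i + k * r ∈ Set.range γ → k ≤ (γ 0).natAbs := by
    intro k hk
    by_contra hgt
    push_neg at hgt
    have hk0 : (0 : ℤ) ≤ k := by omega
    have h3 : k * 1 ≤ k * r := mul_le_mul_of_nonneg_left (by omega) hk0
    obtain ⟨j, hj⟩ := hk
    have : γ j ≤ γ 0 := h1.antitone (Nat.zero_le j)
    omega
  obtain ⟨m, hm1, hm2⟩ := Int.exists_greatest_of_bdd ⟨((γ 0).natAbs : ℤ), hbdd⟩ hinh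
  refine ⟨m + 1, fun k => ?_⟩
  constructor
  · intro hk
    have := hm2 k hk
    omega
  · intro hk
    have hkm : k ≤ m := by omega
    have := hdown m (m - k).toNat hm1
    rw [show m - ((m - k).toNat : ℤ) = k by omega] at this
    exact this


lemma skew_mem {μ ν : YoungDiagram} {i j : ℕ} :
    (i, j) ∈ μ.cells \ ν.cells ↔ ν.rowLen i ≤ j ∧ j < μ.rowLen i := by
  rw [Finset.mem_sdiff, YoungDiagram.mem_cells, YoungDiagram.mem_cells,
    YoungDiagram.mem_iff_lt_rowLen, YoungDiagram.mem_iff_lt_rowLen, not_lt, and_comm]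

lemma skew_eq_biUnion {μ ν : YoungDiagram} {a b : ℕ}
    (hout : ∀ i, ¬(a ≤ i ∧ i ≤ b) → ν.rowLen i = μ.rowLen i) :
    μ.cells \ ν.cells = (Finset.Icc a b).biUnion
      (fun i => {i} ×ˢ Finset.Ico (ν.rowLen i) (μ.rowLen i)) := by
  ext ⟨i, j⟩
  rw [skew_mem, Finset.mem_biUnion]
  constructor
  · rintro ⟨h1, h2⟩
    refine ⟨i, ?_, ?_⟩
    · rw [Finset.mem_Icc]
      by_contra hc
      have := hout i (by omega)
      omega
    · rw [Finset.mem_product, Finset.mem_singleton, Finset.mem_Ico]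
      exact ⟨rfl, h1, h2⟩
  · rintro ⟨i', _, hm⟩
    rw [Finset.mem_product, Finset.mem_singleton, Finset.mem_Ico] at hm
    obtain ⟨rfl, hm2⟩ := hm
    exact hm2

lemma skew_card {μ ν : YoungDiagram} {a b : ℕ}
    (hout : ∀ i, ¬(a ≤ i ∧ i ≤ b) → ν.rowLen i = μ.rowLen i) :
    (μ.cells \ ν.cells).card = ∑ i ∈ Finset.Icc a b, (μ.rowLen i - ν.rowLen i) := by
  rw [skew_eq_biUnion hout, Finset.card_biUnion]
  · apply Finset.sum_congr rfl
    intro i _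
    rw [Finset.card_product, Finset.card_singleton, Nat.card_Ico, one_mul]
  · intro i _ j _ hij
    simp only [Finset.disjoint_left, Finset.mem_product, Finset.mem_singleton]
    rintro ⟨x, y⟩ ⟨rfl, -⟩ ⟨rfl, -⟩
    exact hij rfl

lemma tele (A B : ℕ → ℕ) (a d : ℕ)
    (hmid : ∀ i, a ≤ i → i < a + d → (B i : ℤ) = (A (i + 1) : ℤ) - 1) :
    ∑ i ∈ Finset.Icc a (a + d), ((A i : ℤ) - B i) =
      (A a : ℤ) - B (a + d) + d := by
  induction d with
  | zero => simp
  | succ d ih =>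
    rw [show a + (d + 1) = (a + d) + 1 from rfl,
      Finset.sum_Icc_succ_top (by omega), ih (fun i hi hi2 => hmid i hi (by omega))]
    have h := hmid (a + d) (by omega) (by omega)
    push_cast
    push_cast at h
    omega

section Paths

variable {s : Set (ℕ × ℕ)}

lemma adj_symm : ∀ x y : ℕ × ℕ, Adj x y → Adj y x := by
  rintro ⟨a1, a2⟩ ⟨b1, b2⟩ h
  unfold Adj at h ⊢
  dsimp at h ⊢
  omega

lemma step_symm : Symmetric (fun a b => Adj a b ∧ a ∈ s ∧ b ∈ s) := by
  rintro x y ⟨h1, h2, h3⟩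
  exact ⟨adj_symm x y h1, h3, h2⟩

lemma adj_fst {x y : ℕ × ℕ} (h : Adj x y) : y.1 ≤ x.1 + 1 ∧ x.1 ≤ y.1 + 1 := by
  obtain ⟨x1, x2⟩ := x; obtain ⟨y1, y2⟩ := y
  unfold Adj at h; dsimp at h ⊢; omega

lemma path_rows {x y : ℕ × ℕ}
    (h : Relation.ReflTransGen (fun a b => Adj a b ∧ a ∈ s ∧ b ∈ s) x y)
    (hx : x ∈ s) :
    ∀ i : ℕ, x.1 ≤ i → i ≤ y.1 → ∃ c ∈ s, c.1 = i := by
  induction h with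
  | refl => intro i h1 h2; exact ⟨x, hx, by omega⟩
  | @tail c d hxc hstep ih =>
    intro i h1 h2
    by_cases hc : i ≤ c.1
    · exact ih i h1 hc
    · have := adj_fst hstep.1
      have hi : i = d.1 := by omega
      exact ⟨d, hstep.2.2, hi.symm⟩

lemma path_cross {x y : ℕ × ℕ}
    (h : Relation.ReflTransGen (fun a b => Adj a b ∧ a ∈ s ∧ b ∈ s) x y) :
    ∀ i : ℕ, x.1 ≤ i → i < y.1 → ∃ j : ℕ, (i, j) ∈ s ∧ (i + 1, j) ∈ s := by
  induction h with
  | refl => intro i h1 h2; omega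
  | @tail c d hxc hstep ih =>
    intro i h1 h2
    by_cases hc : i < c.1
    · exact ih i h1 hc
    · have hf := adj_fst hstep.1
      have hi : i = c.1 ∧ d.1 = c.1 + 1 := by omega
      obtain ⟨hi1, hi2⟩ := hi
      obtain ⟨hadj, hcs, hds⟩ := hstep
      unfold Adj at hadj
      rcases hadj with ⟨heq, -⟩ | ⟨heq, -⟩
      · omega
      · refine ⟨c.2, ?_, ?_⟩
        · rw [hi1, Prod.mk.eta]; exact hcs
        · have : (i + 1, c.2) = d := by
            rw [hi1, heq, ← hi2]
          rw [this]; exact hds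

end Paths

lemma R1 {r : ℕ} (hr : 1 ≤ r) {μ ν : YoungDiagram} (h : IsRibbonOf r μ ν) :
    ∃ n ∈ betaSet μ, n - (r : ℤ) ∉ betaSet μ := by
  classical
  obtain ⟨hsub, hcard, hconn, h2x2⟩ := h
  have hBA : ∀ i, ν.rowLen i ≤ μ.rowLen i := by
    intro i
    by_contra hlt
    push_neg at hlt
    have hm : (i, μ.rowLen i) ∈ ν := YoungDiagram.mem_iff_lt_rowLen.mpr hlt
    have hm2 : (i, μ.rowLen i) ∈ μ.cells := hsub (YoungDiagram.mem_cells _ |>.mpr hm)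
    rw [YoungDiagram.mem_cells, YoungDiagram.mem_iff_lt_rowLen] at hm2
    omega
  set D := μ.cells \ ν.cells with hD
  have hne : D.Nonempty := Finset.card_pos.mp (by omega)
  set R := D.image Prod.fst with hR
  have hRne : R.Nonempty := hne.image _
  set a := R.min' hRne with ha
  set b := R.max' hRne with hb
  have hrowIcc : ∀ i j : ℕ, (i, j) ∈ D → a ≤ i ∧ i ≤ b := by
    intro i j hij
    have : i ∈ R := Finset.mem_image.mpr ⟨(i, j), hij, rfl⟩
    exact ⟨R.min'_le i this, R.le_max' i this⟩
  have hcellrow : ∀ i, a ≤ i → i ≤ b → False → True := fun _ _ _ _ => trivial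
  -- cells in extremal rows
  have hacell : ∃ j, (a, j) ∈ D := by
    have := R.min'_mem hRne
    rw [← ha, hR, Finset.mem_image] at this
    obtain ⟨c, hc, hc2⟩ := this
    exact ⟨c.2, by rwa [← hc2, Prod.mk.eta]⟩
  have hbcell : ∃ j, (b, j) ∈ D := by
    have := R.max'_mem hRne
    rw [← hb, hR, Finset.mem_image] at this
    obtain ⟨c, hc, hc2⟩ := this
    exact ⟨c.2, by rwa [← hc2, Prod.mk.eta]⟩
  obtain ⟨ja, hja⟩ := hacell
  obtain ⟨jb, hjb⟩ := hbcell
  have hsD : ((μ.cells : Set (ℕ × ℕ)) \ (ν.cells : Set (ℕ × ℕ))) = ↑D := by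
    rw [hD, Finset.coe_sdiff]
  have hsmem : ∀ p : ℕ × ℕ, p ∈ ((μ.cells : Set (ℕ × ℕ)) \ (ν.cells : Set (ℕ × ℕ))) ↔ p ∈ D := by
    intro p; rw [hsD, Finset.mem_coe]
  have hpath := hconn (a, ja) ((hsmem _).mpr hja) (b, jb) ((hsmem _).mpr hjb)
  have key2 : ∀ i, a ≤ i → i ≤ b → ν.rowLen i < μ.rowLen i := by
    intro i h1 h2
    obtain ⟨c, hcs, hc1⟩ := path_rows hpath ((hsmem _).mpr hja) i h1 h2
    have : (c.1, c.2) ∈ D := by rw [Prod.mk.eta]; exact (hsmem c).mp hcs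
    rw [skew_mem] at this
    rw [← hc1]
    omega
  have key3 : ∀ i, a ≤ i → i < b → ν.rowLen i + 1 ≤ μ.rowLen (i + 1) := by
    intro i h1 h2
    obtain ⟨j, hj1, hj2⟩ := path_cross hpath i h1 h2
    rw [hsmem, skew_mem] at hj1 hj2
    omega
  have key4 : ∀ i, a ≤ i → i < b → μ.rowLen (i + 1) ≤ ν.rowLen i + 1 := by
    intro i h1 h2
    by_contra hc
    push_neg at hc
    have hAA : μ.rowLen (i + 1) ≤ μ.rowLen i := μ.rowLen_anti i (i + 1) (by omega)
    have hBB : ν.rowLen (i + 1) ≤ ν.rowLen i := ν.rowLen_anti i (i + 1) (by omega)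
    exact h2x2 i (ν.rowLen i)
      ⟨skew_mem.mpr ⟨le_refl _, by omega⟩, skew_mem.mpr ⟨by omega, by omega⟩,
       skew_mem.mpr ⟨by omega, by omega⟩, skew_mem.mpr ⟨by omega, by omega⟩⟩
  have hout : ∀ i, ¬(a ≤ i ∧ i ≤ b) → ν.rowLen i = μ.rowLen i := by
    intro i hi
    by_contra hne2
    have : ν.rowLen i < μ.rowLen i := by have := hBA i; omega
    have : (i, ν.rowLen i) ∈ D := skew_mem.mpr ⟨le_refl _, this⟩
    have := hrowIcc _ _ this
    omega
  have hab : a ≤ b := (hrowIcc _ _ hja).2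
  -- cardinality computation
  have hcard2 : (r : ℤ) = (μ.rowLen a : ℤ) - ν.rowLen b + ((b : ℤ) - a) := by
    have h1 : D.card = ∑ i ∈ Finset.Icc a b, (μ.rowLen i - ν.rowLen i) := skew_card hout
    have h2 : ((∑ i ∈ Finset.Icc a b, (μ.rowLen i - ν.rowLen i) : ℕ) : ℤ)
        = ∑ i ∈ Finset.Icc a b, ((μ.rowLen i : ℤ) - ν.rowLen i) := by
      rw [Nat.cast_sum]
      apply Finset.sum_congr rfl
      intro i _
      have := hBA i
      omega
    have h3 : ∑ i ∈ Finset.Icc a (a + (b - a)), ((μ.rowLen i : ℤ) - ν.rowLen i)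
        = (μ.rowLen a : ℤ) - ν.rowLen (a + (b - a)) + (b - a : ℕ) := by
      apply tele
      intro i hi1 hi2
      have k3 := key3 i hi1 (by omega)
      have k4 := key4 i hi1 (by omega)
      omega
    rw [show a + (b - a) = b by omega] at h3
    rw [hcard, h1] at *
    rw [h2, h3]
    have : ((b - a : ℕ) : ℤ) = (b : ℤ) - a := by omega
    omega
  refine ⟨(μ.rowLen a : ℤ) - ((a : ℤ) + 1), ⟨a, rfl⟩, ?_⟩
  rintro ⟨j, hj⟩
  have hnr : (μ.rowLen a : ℤ) - ((a : ℤ) + 1) - r = (ν.rowLen b : ℤ) - ((b : ℤ) + 1) := by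
    omega
  rw [hnr] at hj
  have hBb : ν.rowLen b < μ.rowLen b := key2 b hab (le_refl b)
  rcases le_or_gt j b with hcase | hcase
  · have hAj : μ.rowLen b ≤ μ.rowLen j := μ.rowLen_anti j b hcase
    have : (j : ℤ) ≤ b := by exact_mod_cast hcase
    omega
  · have hAj : μ.rowLen j ≤ μ.rowLen (b + 1) := μ.rowLen_anti (b + 1) j (by omega)
    have heq : ν.rowLen (b + 1) = μ.rowLen (b + 1) := hout (b + 1) (by omega)
    have hBB : ν.rowLen (b + 1) ≤ ν.rowLen b := ν.rowLen_anti b (b + 1) (by omega)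
    have : (b : ℤ) + 1 ≤ j := by exact_mod_cast hcase
    omega

lemma R2 {r : ℕ} (hr : 1 ≤ r) {μ : YoungDiagram} {n : ℤ}
    (hn : n ∈ betaSet μ) (hnrm : n - (r : ℤ) ∉ betaSet μ) :
    ∃ ν, IsRibbonOf r μ ν := by
  classical
  rw [betaSet_eq_range] at hn hnrm
  have hanti := bfun_strictAnti μ
  have hev : ∀ i, μ.colLen 0 ≤ i → bfun μ i = -((i : ℤ) + 1) := bfun_eventually μ
  set N := μ.colLen 0 with hN
  set β := bfun μ with hβ
  obtain ⟨a, han⟩ := hn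
  have hex : ∃ i, β i < n - r := by
    refine ⟨N + (n.natAbs + r), ?_⟩
    rw [hev _ (by omega)]
    omega
  have hcp : β (Nat.find hex) < n - r := Nat.find_spec hex
  have hlt : ∀ i, i < Nat.find hex → n - r < β i := by
    intro i hi
    have h1 : ¬ β i < n - r := Nat.find_min hex hi
    have h2 : β i ≠ n - r := fun he => hnrm ⟨i, he⟩
    omega
  have hac : a < Nat.find hex := by
    apply hanti.lt_iff_gt.mp
    omega
  obtain ⟨b, hbc⟩ : ∃ b, Nat.find hex = b + 1 := ⟨Nat.find hex - 1, by omega⟩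
  rw [hbc] at hcp hlt
  have hab : a ≤ b := by omega
  have hβb : n - r < β b := hlt b (by omega)
  have hβb1 : β (b + 1) < n - r := hcp
  set γ : ℕ → ℤ := fun i =>
    if i < a then β i else if i < b then β (i + 1) else if i = b then n - r else β i
    with hγ
  have hγ1 : ∀ i, i < a → γ i = β i := by
    intro i h; simp only [hγ, if_pos h]
  have hγ2 : ∀ i, a ≤ i → i < b → γ i = β (i + 1) := by
    intro i h1 h2; simp only [hγ]; rw [if_neg (by omega), if_pos h2]
  have hγ3 : γ b = n - r := by
    simp only [hγ]
    rw [if_neg (by omega), if_neg (by omega)]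
    simp
  have hγ4 : ∀ i, b < i → γ i = β i := by
    intro i h; simp only [hγ]; rw [if_neg (by omega), if_neg (by omega), if_neg (by omega)]
  have hconsec : ∀ i j : ℕ, i < j → β j < β i := fun i j hij => hanti hij
  have hγanti : StrictAnti γ := by
    apply strictAnti_nat_of_succ_lt
    intro i
    by_cases h1 : i + 1 < a
    · rw [hγ1 (i + 1) h1, hγ1 i (by omega)]
      exact hconsec _ _ (by omega)
    · by_cases h2 : i + 1 = a
      · have e2 : γ i = β i := hγ1 i (by omega)
        by_cases h3 : a < b
        · have e1 : γ (i + 1) = β (i + 1 + 1) := hγ2 (i + 1) (by omega) (by omega)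
          rw [e1, e2]
          exact hconsec _ _ (by omega)
        · have hba : i + 1 = b := by omega
          have e1 : γ (i + 1) = n - r := by rw [hba]; exact hγ3
          rw [e1, e2]
          have hc : β a < β i := hconsec _ _ (by omega)
          omega
      · by_cases h3 : i + 1 < b
        · have e1 : γ (i + 1) = β (i + 1 + 1) := hγ2 (i + 1) (by omega) h3
          have e2 : γ i = β (i + 1) := hγ2 i (by omega) (by omega)
          rw [e1, e2]
          exact hconsec _ _ (by omega)
        · by_cases h4 : i + 1 = b
          · have e1 : γ (i + 1) = n - r := by rw [h4]; exact hγ3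
            have e2 : γ i = β (i + 1) := hγ2 i (by omega) (by omega)
            rw [e1, e2, h4]
            omega
          · by_cases h5 : i = b
            · have e1 : γ (i + 1) = β (i + 1) := hγ4 (i + 1) (by omega)
              have e2 : γ i = n - r := by rw [h5]; exact hγ3
              rw [e1, e2, h5]
              exact hβb1
            · rw [hγ4 (i + 1) (by omega), hγ4 i (by omega)]
              exact hconsec _ _ (by omega)
  set N2 := max N (b + 1) with hN2
  have hγev : ∀ i, N2 ≤ i → γ i = -((i : ℤ) + 1) := by
    intro i hi
    rw [hγ4 i (by omega)]
    exact hev i (by omega)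
  set ν := ofGamma γ hγanti N2 hγev with hν
  have hBν : ∀ i, ((ν.rowLen i : ℤ)) = γ i + i + 1 := fun i => rowLen_ofGamma_int i
  have hcastA : ∀ i, (μ.rowLen i : ℤ) = β i + i + 1 := by
    intro i
    simp only [hβ, bfun]
    ring
  have hAanti : ∀ i j : ℕ, i ≤ j → μ.rowLen j ≤ μ.rowLen i := fun i j h => μ.rowLen_anti i j h
  -- structural facts
  have hB1 : ∀ i, i < a ∨ b < i → ν.rowLen i = μ.rowLen i := by
    intro i hi
    have h1 := hBν i
    have h2 := hcastA i
    rcases hi with hi | hi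
    · rw [hγ1 i hi] at h1; omega
    · rw [hγ4 i hi] at h1; omega
  have hB2 : ∀ i, a ≤ i → i < b → (ν.rowLen i : ℤ) = (μ.rowLen (i + 1) : ℤ) - 1 := by
    intro i h1 h2
    have h3 := hBν i
    have h4 := hcastA (i + 1)
    rw [hγ2 i h1 h2] at h3
    push_cast at h3 h4 ⊢
    omega
  have hB3 : (ν.rowLen b : ℤ) = n - r + b + 1 := by
    have h3 := hBν b
    rw [hγ3] at h3
    omega
  have hBA : ∀ i, ν.rowLen i ≤ μ.rowLen i := by
    intro i
    have h1 := hBν i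
    have h2 := hcastA i
    by_cases hia : i < a
    · rw [hB1 i (Or.inl hia)]
    · by_cases hib : i < b
      · have := hB2 i (by omega) hib
        have h5 := hcastA (i + 1)
        have h6 := hAanti i (i + 1) (by omega)
        omega
      · by_cases hieq : i = b
        · subst hieq
          have := hB3
          omega
        · rw [hB1 i (Or.inr (by omega))]
  have hrow : ∀ i, a ≤ i → i ≤ b → ν.rowLen i < μ.rowLen i := by
    intro i h1 h2
    by_cases hib : i < b
    · have h3 := hB2 i h1 hib
      have h4 := hAanti i (i + 1) (by omega)
      have h5 := hcastA i
      have h6 := hcastA (i + 1)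
      omega
    · have hieq : i = b := by omega
      have h5 := hcastA i
      have h6 := hB3
      rw [← hieq] at h6
      have hβb' : n - (r : ℤ) < β i := by rw [hieq]; exact hβb
      omega
  have hout : ∀ i, ¬(a ≤ i ∧ i ≤ b) → ν.rowLen i = μ.rowLen i := by
    intro i hi
    exact hB1 i (by omega)
  -- subset
  have hsub : ν.cells ⊆ μ.cells := by
    intro x hx
    obtain ⟨i, j⟩ := x
    rw [YoungDiagram.mem_cells, YoungDiagram.mem_iff_lt_rowLen] at hx ⊢
    have := hBA i
    omega
  -- cardinality
  have hcardD : (μ.cells \ ν.cells).card = r := by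
    have h1 := skew_card (μ := μ) (ν := ν) hout
    have h2 : ((∑ i ∈ Finset.Icc a b, (μ.rowLen i - ν.rowLen i) : ℕ) : ℤ)
        = ∑ i ∈ Finset.Icc a b, ((μ.rowLen i : ℤ) - ν.rowLen i) := by
      rw [Nat.cast_sum]
      apply Finset.sum_congr rfl
      intro i _
      have := hBA i
      omega
    have h3 : ∑ i ∈ Finset.Icc a (a + (b - a)), ((μ.rowLen i : ℤ) - ν.rowLen i)
        = (μ.rowLen a : ℤ) - ν.rowLen (a + (b - a)) + (b - a : ℕ) := by
      apply tele
      intro i hi1 hi2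
      exact hB2 i hi1 (by omega)
    rw [show a + (b - a) = b by omega] at h3
    have h5 := hcastA a
    have hba : ((b - a : ℕ) : ℤ) = (b : ℤ) - a := by omega
    have : ((μ.cells \ ν.cells).card : ℤ) = (r : ℤ) := by
      rw [h1, h2, h3, hB3, h5, hba, han]
      ring
    exact_mod_cast this
  -- no 2x2
  have h2x2 : ∀ i j : ℕ, ¬ ((i, j) ∈ μ.cells \ ν.cells ∧ (i + 1, j) ∈ μ.cells \ ν.cells ∧
      (i, j + 1) ∈ μ.cells \ ν.cells ∧ (i + 1, j + 1) ∈ μ.cells \ ν.cells) := by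
    rintro i j ⟨m1, m2, m3, m4⟩
    rw [skew_mem] at m1 m2 m3 m4
    have hi1 : a ≤ i ∧ i ≤ b := by
      by_contra hc
      have := hout i hc
      omega
    have hi2 : a ≤ i + 1 ∧ i + 1 ≤ b := by
      by_contra hc
      have := hout (i + 1) hc
      omega
    have hb2 := hB2 i (by omega) (by omega)
    omega
  -- connectivity
  set s := ((μ.cells : Set (ℕ × ℕ)) \ (ν.cells : Set (ℕ × ℕ))) with hs
  have hsmem : ∀ p : ℕ × ℕ, p ∈ s ↔ (ν.rowLen p.1 ≤ p.2 ∧ p.2 < μ.rowLen p.1) := by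
    intro p
    rw [hs, show ((μ.cells : Set (ℕ × ℕ)) \ (ν.cells : Set (ℕ × ℕ))) = ↑(μ.cells \ ν.cells)
      from (Finset.coe_sdiff _ _).symm, Finset.mem_coe, ← Prod.mk.eta (p := p), skew_mem]
  have hrows' : ∀ p : ℕ × ℕ, p ∈ s → a ≤ p.1 ∧ p.1 ≤ b := by
    intro p hp
    rw [hsmem] at hp
    by_contra hc
    have := hout p.1 hc
    omega
  set step := fun x y : ℕ × ℕ => Adj x y ∧ x ∈ s ∧ y ∈ s with hstep
  have hsymm : Symmetric step := step_symm
  set P := Relation.ReflTransGen step with hP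
  have hPsymm : Symmetric P := fun x y h => by
    induction h with
    | refl => exact Relation.ReflTransGen.refl
    | tail _ hs ih => exact Relation.ReflTransGen.head (hsymm hs) ih
  have hPtrans : Transitive P := fun x y z hxy hyz => hxy.trans hyz
  -- horizontal connections within a row
  have hhorsub : ∀ i j d : ℕ, ν.rowLen i ≤ j → j + d < μ.rowLen i → P (i, j) (i, j + d) := by
    intro i j d
    induction d with
    | zero => intro _ _; exact Relation.ReflTransGen.refl
    | succ d ih =>
      intro h1 h2
      apply Relation.ReflTransGen.tail (ih h1 (by omega))
      refine ⟨Or.inl ⟨rfl, Or.inl rfl⟩, ?_, ?_⟩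
      · rw [hsmem]; dsimp only; omega
      · rw [hsmem]; dsimp only; omega
  have hhor : ∀ i j j' : ℕ, ν.rowLen i ≤ j → j < μ.rowLen i → ν.rowLen i ≤ j' →
      j' < μ.rowLen i → P (i, j) (i, j') := by
    intro i j j' h1 h2 h3 h4
    rcases le_total j j' with hle | hle
    · have := hhorsub i j (j' - j) h1 (by omega)
      rwa [show j + (j' - j) = j' by omega] at this
    · have := hhorsub i j' (j - j') h3 (by omega)
      rw [show j' + (j - j') = j by omega] at this
      exact hPsymm this
  -- vertical step
  have hBstep : ∀ i, a ≤ i → i < b → ν.rowLen (i + 1) ≤ ν.rowLen i ∧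
      ν.rowLen i < μ.rowLen (i + 1) := by
    intro i h1 h2
    have hb2 := hB2 i h1 h2
    by_cases h3 : i + 1 < b
    · have hb3 := hB2 (i + 1) (by omega) h3
      have hidx : i + 1 + 1 = i + 2 := by omega
      rw [hidx] at hb3
      have := hAanti (i + 1) (i + 2) (by omega)
      have h6 := hcastA (i + 1)
      have h7 := hcastA (i + 2)
      omega
    · have hrowb := hrow (i + 1) (by omega) (by omega)
      omega
  have hvert : ∀ i, a ≤ i → i < b → step (i, ν.rowLen i) (i + 1, ν.rowLen i) := by
    intro i h1 h2
    obtain ⟨hv1, hv2⟩ := hBstep i h1 h2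
    refine ⟨Or.inr ⟨rfl, Or.inl rfl⟩, ?_, ?_⟩
    · rw [hsmem]
      exact ⟨le_refl _, hrow i h1 (by omega)⟩
    · rw [hsmem]
      exact ⟨hv1, hv2⟩
  -- chain down the rows
  have hchain : ∀ d : ℕ, a + d ≤ b → P (a, ν.rowLen a) (a + d, ν.rowLen (a + d)) := by
    intro d
    induction d with
    | zero => intro _; exact Relation.ReflTransGen.refl
    | succ d ih =>
      intro hd
      have h1 : a + d < b := by omega
      apply hPtrans (ih (by omega))
      apply hPtrans (Relation.ReflTransGen.single (hvert (a + d) (by omega) h1))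
      obtain ⟨hv1, hv2⟩ := hBstep (a + d) (by omega) h1
      have := hhor (a + d + 1) (ν.rowLen (a + d)) (ν.rowLen (a + d + 1)) hv1 hv2
        (le_refl _) (hrow (a + d + 1) (by omega) (by omega))
      rwa [show a + (d + 1) = a + d + 1 by omega]
  have hconn : ConnectedCells s := by
    rintro ⟨x1, x2⟩ hx ⟨y1, y2⟩ hy
    have hx' := (hsmem _).mp hx
    have hy' := (hsmem _).mp hy
    have hxr := hrows' _ hx
    have hyr := hrows' _ hy
    dsimp at hx' hy' hxr hyr
    have p1 : P (x1, x2) (x1, ν.rowLen x1) :=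
      hhor x1 x2 (ν.rowLen x1) hx'.1 hx'.2 (le_refl _) (hrow x1 hxr.1 hxr.2)
    have p2 : P (a, ν.rowLen a) (x1, ν.rowLen x1) := by
      have := hchain (x1 - a) (by omega)
      rwa [show a + (x1 - a) = x1 by omega] at this
    have p3 : P (a, ν.rowLen a) (y1, ν.rowLen y1) := by
      have := hchain (y1 - a) (by omega)
      rwa [show a + (y1 - a) = y1 by omega] at this
    have p4 : P (y1, y2) (y1, ν.rowLen y1) :=
      hhor y1 y2 (ν.rowLen y1) hy'.1 hy'.2 (le_refl _) (hrow y1 hyr.1 hyr.2)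
    exact hPtrans (hPtrans (hPtrans p1 (hPsymm p2)) p3) (hPsymm p4)
  exact ⟨ν, hsub, hcardD, hconn, h2x2⟩

lemma rcore_iff_stable {r : ℕ} (hr : 1 ≤ r) (μ : YoungDiagram) :
    IsRCore r μ ↔ ∀ n ∈ betaSet μ, n - (r : ℤ) ∈ betaSet μ := by
  constructor
  · intro hcore n hn
    by_contra hc
    obtain ⟨ν, hrib⟩ := R2 hr hn hc
    exact hcore ν hrib
  · intro hst ν hrib
    obtain ⟨n, hn, hn2⟩ := R1 hr hrib
    exact hn2 (hst n hn)

lemma rcore_hK {r : ℕ} (hr : 0 < r) {μ : YoungDiagram} (hμ : IsRCore r μ) :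
    ∀ (i : Fin r) (k : ℤ), ((i : ℤ) + k * r) ∈ betaSet μ ↔ k < charge r (betaSet μ) i := by
  intro i
  have hst : ∀ n ∈ Set.range (bfun μ), n - (r : ℤ) ∈ Set.range (bfun μ) := by
    have h := (rcore_iff_stable (by omega) μ).mp hμ
    rw [betaSet_eq_range] at h
    exact h
  obtain ⟨t, ht⟩ := exists_threshold hr (bfun_strictAnti μ) (bfun_eventually μ) hst
    (i : ℤ) (fin_coe_nonneg i)
  have hcharge : charge r (betaSet μ) i = t :=
    charge_eq hr _ _ t (fun k => by rw [betaSet_eq_range]; exact ht k)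
  intro k
  rw [hcharge, betaSet_eq_range]
  exact ht k

theorem main (r : ℕ) (hr : 2 ≤ r) :
    Set.BijOn (fun (μ : YoungDiagram) (i : Fin r) => charge r (betaSet μ) i)
      {μ | IsRCore r μ}
      {v : Fin r → ℤ | ∑ i, v i = 0} := by
  classical
  have hr0 : 0 < r := by omega
  have hr1 : 1 ≤ r := by omega
  have hrz : (0 : ℤ) < r := by exact_mod_cast hr0
  have hrne : (r : ℤ) ≠ 0 := by omega
  constructor
  · -- MapsTo
    intro μ hμ
    simp only [Set.mem_setOf_eq] at hμ ⊢
    exact sum_t_eq_zero hr0 (bfun_strictAnti μ) (bfun_eventually μ)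
      (fun i => charge r (betaSet μ) i)
      (fun i k => by rw [← betaSet_eq_range]; exact rcore_hK hr0 hμ i k)
  constructor
  · -- InjOn
    intro μ1 h1 μ2 h2 heq
    simp only [Set.mem_setOf_eq] at h1 h2
    have hK1 := rcore_hK hr0 h1
    have hK2 := rcore_hK hr0 h2
    apply betaSet_inj
    ext n
    have hmod0 : 0 ≤ n % (r : ℤ) := Int.emod_nonneg n hrne
    have hmodr : n % (r : ℤ) < r := Int.emod_lt_of_pos n hrz
    set i : Fin r := ⟨(n % (r : ℤ)).toNat, by omega⟩ with hi
    have hcoe : (i : ℤ) = n % (r : ℤ) := by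
      simp only [hi]
      omega
    have hdec : n = (i : ℤ) + (n / (r : ℤ)) * r := by
      rw [hcoe]
      have := Int.emod_add_mul_ediv n r
      linarith [mul_comm (r : ℤ) (n / (r : ℤ))]
    have hch : charge r (betaSet μ1) i = charge r (betaSet μ2) i := congrFun heq i
    rw [hdec, hK1 i _, hK2 i _, hch]
  · -- SurjOn
    intro v hv
    simp only [Set.mem_setOf_eq] at hv
    set S : Set ℤ := {z : ℤ | z / (r : ℤ) < v ⟨(z % (r : ℤ)).toNat % r, Nat.mod_lt _ hr0⟩}
      with hS
    have hSmem : ∀ (i : Fin r) (k : ℤ), ((i : ℤ) + k * r ∈ S ↔ k < v i) := by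
      intro i k
      have hmod : ((i : ℤ) + k * r) % r = i := by
        rw [Int.add_mul_emod_self_right]
        exact Int.emod_eq_of_lt (fin_coe_nonneg i) (fin_coe_lt i)
      have hdiv : ((i : ℤ) + k * r) / r = k := by
        rw [Int.add_mul_ediv_right _ _ hrne,
          Int.ediv_eq_zero_of_lt (fin_coe_nonneg i) (fin_coe_lt i), zero_add]
      simp only [hS, Set.mem_setOf_eq, hmod, hdiv]
      have hval : ((i : ℤ)).toNat % r = (i : ℕ) := by
        have h1 : ((i : ℤ)).toNat = (i : ℕ) := by
          have : ((i : ℤ)) = (((i : ℕ) : ℕ) : ℤ) := rfl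
          omega
        rw [h1, Nat.mod_eq_of_lt i.isLt]
      have hfin : (⟨((i : ℤ)).toNat % r, Nat.mod_lt _ hr0⟩ : Fin r) = i := Fin.ext hval
      rw [hfin]
    have hstS : ∀ n ∈ S, n - (r : ℤ) ∈ S := by
      intro n hn
      have h1 : n - (r : ℤ) = n + (-1) * r := by ring
      simp only [hS, Set.mem_setOf_eq] at hn ⊢
      rw [h1, Int.add_mul_emod_self_right, Int.add_mul_ediv_right _ _ hrne]
      omega
    set M := 1 + ∑ i, (v i).natAbs with hMdef
    have hM : ∀ i, -(M : ℤ) ≤ v i := by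
      intro i
      have h3 : (v i).natAbs ≤ ∑ j, (v j).natAbs :=
        Finset.single_le_sum (f := fun j => (v j).natAbs) (fun j _ => Nat.zero_le _)
          (Finset.mem_univ i)
      omega
    have hMr : ((M * r : ℕ) : ℤ) = (M : ℤ) * r := by push_cast; ring
    obtain ⟨W, hWs, hWc⟩ := residue_window hr0 S v hSmem M hM
    have hWcard : W.card = M * r := by
      have h4 : (W.card : ℤ) = (∑ i, v i) + (r : ℤ) * M := by
        rw [hWc, Finset.sum_add_distrib, Finset.sum_const, Finset.card_univ,
          Fintype.card_fin, nsmul_eq_mul]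
      rw [hv] at h4
      have : (W.card : ℤ) = ((M * r : ℕ) : ℤ) := by rw [hMr]; linarith
      exact_mod_cast this
    set W' := W.image (fun x : ℤ => -x) with hW'
    have hW'card : W'.card = M * r := by
      rw [hW', Finset.card_image_of_injective _ neg_injective, hWcard]
    set e := W'.orderIsoOfFin hW'card with he
    set γ : ℕ → ℤ := fun i => if h : i < M * r then -((e ⟨i, h⟩ : ℤ)) else -(i : ℤ) - 1
      with hγ
    have hmemW : ∀ x : Fin (M * r), -((e x : ℤ)) ∈ S ∧ -((M * r : ℕ) : ℤ) ≤ -((e x : ℤ)) := by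
      intro x
      have hx : ((e x : ℤ)) ∈ W.image (fun x : ℤ => -x) := (e x).2
      obtain ⟨w, hw, hw2⟩ := Finset.mem_image.mp hx
      have hw3 : -((e x : ℤ)) = w := by omega
      rw [hw3]
      have hwS : w ∈ S ∩ Set.Ici (-(M : ℤ) * r) := by
        rw [← hWs]; exact Finset.mem_coe.mpr hw
      refine ⟨hwS.1, ?_⟩
      have := hwS.2
      rw [Set.mem_Ici] at this
      rw [hMr]
      linarith
    have hγanti : StrictAnti γ := by
      intro i j hij
      simp only [hγ]
      by_cases h1 : i < M * r
      · by_cases h2 : j < M * r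
        · rw [dif_pos h1, dif_pos h2]
          have : e ⟨i, h1⟩ < e ⟨j, h2⟩ := e.strictMono (by exact Fin.mk_lt_mk.mpr hij)
          have h5 : ((e ⟨i, h1⟩ : ℤ)) < ((e ⟨j, h2⟩ : ℤ)) := by exact_mod_cast this
          omega
        · rw [dif_pos h1, dif_neg h2]
          have h6 := (hmemW ⟨i, h1⟩).2
          have h7 : ((M * r : ℕ) : ℤ) ≤ (j : ℤ) := by exact_mod_cast (by omega : M * r ≤ j)
          omega
      · by_cases h2 : j < M * r
        · omega
        · rw [dif_neg h1, dif_neg h2]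
          omega
    have hγev : ∀ i, M * r ≤ i → γ i = -((i : ℤ) + 1) := by
      intro i hi
      simp only [hγ, dif_neg (by omega : ¬ i < M * r)]
      ring
    have hγrange : Set.range γ = S := by
      ext z
      constructor
      · rintro ⟨i, rfl⟩
        by_cases h : i < M * r
        · simp only [hγ, dif_pos h]
          exact (hmemW ⟨i, h⟩).1
        · simp only [hγ, dif_neg h]
          simp only [hS, Set.mem_setOf_eq]
          have hlt : (-(i : ℤ) - 1) / r < -(M : ℤ) := by
            rw [Int.ediv_lt_iff_lt_mul hrz]
            have h7 : ((M * r : ℕ) : ℤ) ≤ (i : ℤ) := by exact_mod_cast (by omega : M * r ≤ i)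
            have : -(M : ℤ) * r = -(((M * r : ℕ) : ℤ)) := by rw [hMr]; ring
            rw [this]
            omega
          exact lt_of_lt_of_le hlt (hM _)
      · intro hz
        by_cases h : -(M : ℤ) * r ≤ z
        · have hzW : z ∈ W := by
            rw [← Finset.mem_coe, hWs]
            exact ⟨hz, h⟩
          have hzW' : -z ∈ W' := by
            rw [hW', Finset.mem_image]
            exact ⟨z, hzW, rfl⟩
          obtain ⟨x, hx⟩ := e.surjective ⟨-z, hzW'⟩
          refine ⟨x.val, ?_⟩
          simp only [hγ, dif_pos x.isLt]
          have hxe : (⟨x.val, x.isLt⟩ : Fin (M * r)) = x := Fin.ext rfl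
          rw [hxe, hx]
          simp
        · push_neg at h
          have h' : z < -(((M * r : ℕ) : ℤ)) := by
            rw [hMr]; linarith
          refine ⟨(-z - 1).toNat, ?_⟩
          simp only [hγ, dif_neg (show ¬ (-z - 1).toNat < M * r by omega)]
          omega
    set μ0 := ofGamma γ hγanti (M * r) hγev with hμ0
    have hbs : betaSet μ0 = S := by
      rw [hμ0, betaSet_ofGamma, hγrange]
    have hcore : IsRCore r μ0 := by
      apply (rcore_iff_stable hr1 μ0).mpr
      rw [hbs]
      exact hstS
    refine ⟨μ0, hcore, ?_⟩
    show (fun (i : Fin r) => charge r (betaSet μ0) (i : ℤ)) = v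
    funext i
    rw [hbs]
    exact charge_eq hr0 S _ (v i) (hSmem i)

end RCoreProof

/-- The map sending an `r`-core to its charge vector is a bijection onto the
`A_{r-1}` root lattice `{(c_0, …, c_{r-1}) ∈ ℤ^r : Σ c_i = 0}`. -/


theorem rcore_charge_bijection (r : ℕ) (hr : 2 ≤ r) :
    Set.BijOn (fun (μ : YoungDiagram) (i : Fin r) => charge r (betaSet μ) i)
      {μ | IsRCore r μ}
      {v : Fin r → ℤ | ∑ i, v i = 0} := by
  exact RCoreProof.main r hr
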